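/- Let g, y, z be vectors and suppose g = -Σₜ λₜ∇Φᵗ(y) with λₜ ≥ 0, Σₜ λₜ ≤ Λ, where each Φᵗ is C² with ‖∇²Φᵗ‖_op ≤ C_Δ on the segment [y, z], Φᵗ(y) = Tmax for active t, and Φᵗ(z) ≤ Tmax. Then gᵀ(z - y) ≥ -Λ·(C_Δ/2)·‖z - y‖². -/

import Mathlib

open RealInnerProductSpace

set_option maxHeartbeats 1000000 in
lemma taylor_lower {n : ℕ} (Φ : EuclideanSpace ℝ (Fin n) → ℝ) (CΔ : ℝ)
    (hΦ : ContDiff ℝ 2 Φ) (y z : EuclideanSpace ℝ (Fin n))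
    (hHess : ∀ x ∈ segment ℝ y z, ‖fderiv ℝ (fderiv ℝ Φ) x‖ ≤ CΔ)
    (hle : Φ z ≤ Φ y) :
    fderiv ℝ Φ y (z - y) ≤ CΔ / 2 * ‖z - y‖ ^ 2 := by
  set v := z - y with hv
  set γ : ℝ → EuclideanSpace ℝ (Fin n) := fun s => y + s • v with hγ
  have hγ0 : γ 0 = y := by simp [hγ]
  have hγ1 : γ 1 = z := by simp [hγ, hv]
  have hγmem : ∀ s ∈ Set.Icc (0:ℝ) 1, γ s ∈ segment ℝ y z := by
    intro s hs
    rw [segment_eq_image']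
    exact ⟨s, hs, rfl⟩
  have hγd : ∀ s : ℝ, HasDerivAt γ v s := by
    intro s
    have := ((hasDerivAt_id s).smul_const v).const_add y
    rw [one_smul] at this
    exact this
  have hΦd : Differentiable ℝ Φ := hΦ.differentiable (by norm_num)
  have hf : ∀ s : ℝ, HasDerivAt (fun s => Φ (γ s)) (fderiv ℝ Φ (γ s) v) s := fun s =>
    (hΦd (γ s)).hasFDerivAt.comp_hasDerivAt s (hγd s)
  set F := fderiv ℝ Φ with hF
  have hFc : ContDiff ℝ 1 F := hΦ.fderiv_right (by norm_num)
  have hφ : ∀ s : ℝ, HasDerivAt (fun s => F (γ s) v)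
      ((fderiv ℝ F (γ s)) v v) s := by
    intro s
    have h1 : HasFDerivAt (fun x => F x v)
        ((ContinuousLinearMap.apply ℝ ℝ v).comp (fderiv ℝ F (γ s))) (γ s) :=
      (ContinuousLinearMap.apply ℝ ℝ v).hasFDerivAt.comp (γ s)
        ((hFc.differentiable one_ne_zero) (γ s)).hasFDerivAt
    exact h1.comp_hasDerivAt s (hγd s)
  set L := CΔ * ‖v‖ ^ 2 with hL
  have hbound : ∀ s ∈ Set.Icc (0:ℝ) 1, ‖(fderiv ℝ F (γ s)) v v‖ ≤ L := by
    intro s hs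
    calc ‖(fderiv ℝ F (γ s)) v v‖ ≤ ‖(fderiv ℝ F (γ s)) v‖ * ‖v‖ :=
          ContinuousLinearMap.le_opNorm _ v
      _ ≤ (‖fderiv ℝ F (γ s)‖ * ‖v‖) * ‖v‖ := by
          gcongr; exact ContinuousLinearMap.le_opNorm _ v
      _ ≤ (CΔ * ‖v‖) * ‖v‖ := by
          gcongr; exact hHess _ (hγmem s hs)
      _ = L := by ring
  have hlip : ∀ s ∈ Set.Icc (0:ℝ) 1, |F (γ s) v - F y v| ≤ L * s := by
    intro s hs
    have := Convex.norm_image_sub_le_of_norm_hasDerivWithin_le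
      (f := fun s => F (γ s) v) (f' := fun s => (fderiv ℝ F (γ s)) v v)
      (fun x hx => (hφ x).hasDerivWithinAt) hbound (convex_Icc 0 1)
      (Set.left_mem_Icc.2 one_pos.le) hs
    simp only [hγ0] at this
    simpa [abs_of_nonneg hs.1] using this
  set h : ℝ → ℝ := fun s => Φ (γ s) - s * (F y v) + (L/2) * s^2 with hh
  have hhd : ∀ s : ℝ, HasDerivAt h (F (γ s) v - F y v + L * s) s := by
    intro s
    have := ((hf s).sub (((hasDerivAt_id s).mul_const (F y v)))).add
      (((hasDerivAt_id s).pow 2).const_mul (L/2))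
    refine this.congr_deriv ?_
    simp
    ring
  have hmono : MonotoneOn h (Set.Icc 0 1) := by
    apply monotoneOn_of_deriv_nonneg (convex_Icc 0 1)
    · exact fun s _ => ((hhd s).differentiableAt.continuousAt).continuousWithinAt
    · intro s hs
      exact ((hhd s).differentiableAt).differentiableWithinAt
    · intro s hs
      rw [interior_Icc] at hs
      rw [(hhd s).deriv]
      have h1 := hlip s (Set.mem_Icc_of_Ioo hs)
      have := abs_le.1 h1
      linarith [this.1]
  have key := hmono (Set.left_mem_Icc.2 one_pos.le) (Set.right_mem_Icc.2 one_pos.le) one_pos.le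
  simp only [hh, hγ0, hγ1] at key
  have : F y v ≤ Φ z - Φ y + L / 2 := by nlinarith
  have h2 : L / 2 = CΔ / 2 * ‖v‖ ^ 2 := by rw [hL]; ring
  linarith

/-- KKT-based weak-convexity inequality: if `g = -Σₜ λₜ ∇Φᵗ(y)` with `λₜ ≥ 0`,
`Σₜ λₜ ≤ Λ`, each `Φᵗ` has Hessian bounded by `C_Δ` on the segment `[y, z]`,
`Φᵗ(y) = Tmax` and `Φᵗ(z) ≤ Tmax`, then `gᵀ(z - y) ≥ -Λ (C_Δ/2) ‖z - y‖²`. -/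
theorem kkt_weak_convexity {n m : ℕ}
    (Φ : Fin m → EuclideanSpace ℝ (Fin n) → ℝ)
    (lam : Fin m → ℝ) (Λ CΔ Tmax : ℝ)
    (hΛ : 0 ≤ Λ) (hCΔ : 0 ≤ CΔ)
    (hlam : ∀ t, 0 ≤ lam t) (hsum : ∑ t, lam t ≤ Λ)
    (hΦ : ∀ t, ContDiff ℝ 2 (Φ t))
    (y z : EuclideanSpace ℝ (Fin n))
    (hHess : ∀ t, ∀ x ∈ segment ℝ y z, ‖fderiv ℝ (fderiv ℝ (Φ t)) x‖ ≤ CΔ)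
    (hactive : ∀ t, Φ t y = Tmax) (hfeas : ∀ t, Φ t z ≤ Tmax)
    (g : EuclideanSpace ℝ (Fin n))
    (hg : g = -∑ t, lam t • gradient (Φ t) y) :
    ⟪g, z - y⟫ ≥ -Λ * (CΔ / 2) * ‖z - y‖ ^ 2 := by
  have hgrad : ∀ t, ⟪gradient (Φ t) y, z - y⟫ = fderiv ℝ (Φ t) y (z - y) := by
    intro t
    rw [gradient]
    exact InnerProductSpace.toDual_symm_apply
  have hkey : ∀ t, fderiv ℝ (Φ t) y (z - y) ≤ CΔ / 2 * ‖z - y‖ ^ 2 := fun t =>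
    taylor_lower (Φ t) CΔ (hΦ t) y z (hHess t) (by rw [hactive t]; exact hfeas t)
  have hinner : ⟪g, z - y⟫ = -∑ t, lam t * fderiv ℝ (Φ t) y (z - y) := by
    rw [hg, inner_neg_left, sum_inner]
    congr 1
    refine Finset.sum_congr rfl fun t _ => ?_
    rw [real_inner_smul_left, hgrad t]
  rw [hinner, ge_iff_le]
  have hmain : ∑ t, lam t * fderiv ℝ (Φ t) y (z - y) ≤ Λ * (CΔ / 2) * ‖z - y‖ ^ 2 := by
    calc ∑ t, lam t * fderiv ℝ (Φ t) y (z - y)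
        ≤ ∑ t, lam t * (CΔ / 2 * ‖z - y‖ ^ 2) :=
          Finset.sum_le_sum fun t _ => mul_le_mul_of_nonneg_left (hkey t) (hlam t)
      _ = (∑ t, lam t) * (CΔ / 2 * ‖z - y‖ ^ 2) := by rw [Finset.sum_mul]
      _ ≤ Λ * (CΔ / 2 * ‖z - y‖ ^ 2) := by gcongr
      _ = Λ * (CΔ / 2) * ‖z - y‖ ^ 2 := by ring
  linarith
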